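/- Let G be a finite simple graph with a k-correspondence assignment C, and let H be a subgraph of G such that for every cycle K in H, the assignment C is consistent on K (regarded as a closed walk) and all edges of K are full in C. Then there exists a k-correspondence assignment C' for G equivalent to C such that all edges of H are straight in C' and all vertices of G not belonging to H are fixed in the equivalence. -/

import Mathlib

/-- A `k`-correspondence assignment for a graph `G`: to each ordered pair of adjacent
vertices it assigns a partial injective function (partial equivalence) on colors
`Fin k`, such that `C_{vu}` is the inverse of `C_{uv}`. -/
structure CorrAssign {V : Type*} (G : SimpleGraph V) (k : ℕ) where
  corr : V → V → (Fin k) ≃. (Fin k)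
  corr_symm : ∀ u v, G.Adj u v → corr v u = (corr u v).symm

namespace CorrAssign

variable {V : Type*} {G : SimpleGraph V} {k : ℕ}

/-- A `C`-coloring of `G`. -/
def IsColoring (C : CorrAssign G k) (f : V → Fin k) : Prop :=
  ∀ u v, G.Adj u v → C.corr u v (f u) ≠ some (f v)

/-- `G` is `C`-colorable. -/
def Colorable (C : CorrAssign G k) : Prop := ∃ f, C.IsColoring f

/-- The composed correspondence along a walk. -/
def walkCorr (C : CorrAssign G k) : {u v : V} → G.Walk u v → (Fin k) ≃. (Fin k)
  | _, _, SimpleGraph.Walk.nil => PEquiv.refl _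
  | _, _, @SimpleGraph.Walk.cons _ _ a b _ _h p => (C.corr a b).trans (C.walkCorr p)

/-- `C` is consistent on a closed walk `W`. -/
def ConsistentOn (C : CorrAssign G k) {u : V} (W : G.Walk u u) : Prop :=
  ∀ c c' : Fin k, C.walkCorr W c = some c' → c' = c

/-- `C` is consistent. -/
def Consistent (C : CorrAssign G k) : Prop :=
  ∀ (u : V) (W : G.Walk u u), C.ConsistentOn W

end CorrAssign

/-- `G` is `k`-choosable: any assignment of lists of `k` colors admits a proper coloring
from the lists. -/
def Choosable {V : Type*} (G : SimpleGraph V) (k : ℕ) : Prop :=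
  ∀ L : V → Finset ℕ, (∀ v, (L v).card = k) →
    ∃ φ : V → ℕ, (∀ v, φ v ∈ L v) ∧ ∀ u v, G.Adj u v → φ u ≠ φ v

namespace CorrAssign

variable {V : Type*} {G : SimpleGraph V} {k : ℕ}

/-- `C` and `C'` are equivalent `k`-correspondence assignments, witnessed by the family of
permutations `π`: for every edge `uv`, a color `c` lies in the domain of `C_{uv}` iff
`π u c` lies in the domain of `C'_{uv}`, and `C'_{uv} (π u c) = π v (C_{uv} c)` there.
(Both conditions are captured by `Option.map`.) -/
def EquivVia (C C' : CorrAssign G k) (π : V → Equiv.Perm (Fin k)) : Prop :=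
  ∀ u v, G.Adj u v → ∀ c : Fin k, C'.corr u v (π u c) = Option.map (π v) (C.corr u v c)

/-- The edge `uv` is straight in `C`: `C_{uv}` is the identity on its domain. -/
def Straight (C : CorrAssign G k) (u v : V) : Prop :=
  ∀ c c' : Fin k, C.corr u v c = some c' → c' = c

/-- The edge `uv` is full in `C`: the domain of `C_{uv}` is all of `Fin k`. -/
def Full (C : CorrAssign G k) (u v : V) : Prop :=
  ∀ c : Fin k, (C.corr u v c).isSome

end CorrAssign

section AuxStraighten

theorem pequiv_trans_apply {α β γ : Type*} (f : α ≃. β) (g : β ≃. γ) (a : α) :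
    (f.trans g) a = (f a).bind g := rfl

theorem exists_perm_extend {k : ℕ} (f : Fin k ≃. Fin k) :
    ∃ σ : Equiv.Perm (Fin k), ∀ x y : Fin k, f x = some y → σ y = x := by
  classical
  let e1 : {y : Fin k // (f.symm y).isSome} ≃ {x : Fin k // (f x).isSome} :=
    { toFun := fun y => ⟨(f.symm y.1).get y.2, by
        have h : f.symm y.1 = some ((f.symm y.1).get y.2) := (Option.some_get y.2).symm
        rw [f.eq_some_iff.mp h]; rfl⟩
      invFun := fun x => ⟨(f x.1).get x.2, by
        have h : f x.1 = some ((f x.1).get x.2) := (Option.some_get x.2).symm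
        rw [f.symm.eq_some_iff.mp h]; rfl⟩
      left_inv := fun y => by
        have h : f.symm y.1 = some ((f.symm y.1).get y.2) := (Option.some_get y.2).symm
        have h2 := f.eq_some_iff.mp h
        ext; simp [h2]
      right_inv := fun x => by
        have h : f x.1 = some ((f x.1).get x.2) := (Option.some_get x.2).symm
        have h2 := f.symm.eq_some_iff.mp h
        ext; simp [h2] }
  have hcard : Fintype.card {y : Fin k // ¬ (f.symm y).isSome} =
      Fintype.card {x : Fin k // ¬ (f x).isSome} := by
    rw [Fintype.card_subtype_compl, Fintype.card_subtype_compl, Fintype.card_congr e1]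
  let e2 := Fintype.equivOfCardEq hcard
  refine ⟨Equiv.subtypeCongr e1 e2, fun x y hxy => ?_⟩
  have hy : f.symm y = some x := f.eq_some_iff.mpr hxy
  have hys : (f.symm y).isSome := by rw [hy]; rfl
  have : Equiv.subtypeCongr e1 e2 y = (e1 ⟨y, hys⟩ : Fin k) := by
    simp [Equiv.subtypeCongr, hys]
  rw [this]
  show (f.symm y).get hys = x
  simp [hy]

namespace CorrAssign

variable {V : Type*} {G : SimpleGraph V} {k : ℕ}

def transform (C : CorrAssign G k) (ρ : V → Equiv.Perm (Fin k)) : CorrAssign G k where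
  corr u v := ((ρ u).symm.toPEquiv).trans ((C.corr u v).trans (ρ v).toPEquiv)
  corr_symm u v h := by
    rw [C.corr_symm u v h, PEquiv.symm_trans_rev, PEquiv.symm_trans_rev,
      ← Equiv.toPEquiv_symm, ← Equiv.toPEquiv_symm, Equiv.symm_symm, PEquiv.trans_assoc]

theorem transform_apply (C : CorrAssign G k) (ρ : V → Equiv.Perm (Fin k)) (u v : V)
    (c : Fin k) :
    (C.transform ρ).corr u v c = Option.map (ρ v) (C.corr u v ((ρ u).symm c)) := by
  show ((((ρ u).symm.toPEquiv) c).bind ((C.corr u v).trans (ρ v).toPEquiv) : Option (Fin k)) = _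
  rw [Equiv.toPEquiv_apply, Option.bind_some, pequiv_trans_apply]
  cases h : C.corr u v ((ρ u).symm c) <;> simp [Equiv.toPEquiv_apply]

theorem equivVia_transform (C : CorrAssign G k) (ρ : V → Equiv.Perm (Fin k)) :
    C.EquivVia (C.transform ρ) ρ := by
  intro u v _ c
  rw [transform_apply]
  simp

theorem EquivVia.comp {C C' C'' : CorrAssign G k} {π ρ : V → Equiv.Perm (Fin k)}
    (h1 : C.EquivVia C' π) (h2 : C'.EquivVia C'' ρ) :
    C.EquivVia C'' (fun v => ρ v * π v) := by
  intro u v hadj c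
  simp only [Equiv.Perm.mul_apply]
  rw [h2 u v hadj, h1 u v hadj, Option.map_map]
  rfl

theorem EquivVia.full {C C' : CorrAssign G k} {π : V → Equiv.Perm (Fin k)}
    (h : C.EquivVia C' π) {u v : V} (hadj : G.Adj u v) (hf : C.Full u v) : C'.Full u v := by
  intro c
  obtain ⟨c0, rfl⟩ := (π u).surjective c
  rw [h u v hadj c0]
  have := hf c0
  cases hc : C.corr u v c0 <;> simp_all

theorem EquivVia.walkCorr {C C' : CorrAssign G k} {π : V → Equiv.Perm (Fin k)}
    (h : C.EquivVia C' π) {u v : V} (W : G.Walk u v) (c : Fin k) :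
    C'.walkCorr W (π u c) = Option.map (π v) (C.walkCorr W c) := by
  induction W generalizing c with
  | nil => simp [CorrAssign.walkCorr]
  | @cons a b w hadj p ih =>
    show ((C'.corr a b (π a c)).bind (C'.walkCorr p) : Option (Fin k)) =
      Option.map (π w) ((C.corr a b c).bind (C.walkCorr p))
    rw [h a b hadj c]
    cases hc : C.corr a b c with
    | none => simp
    | some d => simpa using ih d

theorem EquivVia.consistentOn {C C' : CorrAssign G k} {π : V → Equiv.Perm (Fin k)}
    (h : C.EquivVia C' π) {u : V} (W : G.Walk u u) (hc : C.ConsistentOn W) :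
    C'.ConsistentOn W := by
  intro c c' hcc
  obtain ⟨c0, rfl⟩ := (π u).surjective c
  rw [h.walkCorr W c0] at hcc
  cases hd : C.walkCorr W c0 with
  | none => rw [hd] at hcc; simp at hcc
  | some d =>
    rw [hd] at hcc
    simp only [Option.map_some] at hcc
    rw [hc c0 d hd] at hcc
    exact (Option.some_injective _ hcc).symm

theorem Straight.symm {C : CorrAssign G k} {u v : V} (hadj : G.Adj u v)
    (h : C.Straight u v) : C.Straight v u := by
  intro c c' hcc
  rw [C.corr_symm u v hadj] at hcc
  exact (h c' c ((C.corr u v).eq_some_iff.mp hcc)).symm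

theorem walkCorr_eq_some_self (C : CorrAssign G k) {u v : V} (W : G.Walk u v)
    (h : ∀ a b : V, G.Adj a b → s(a, b) ∈ W.edges → ∀ x : Fin k, C.corr a b x = some x)
    (x : Fin k) : C.walkCorr W x = some x := by
  induction W generalizing x with
  | nil => simp [CorrAssign.walkCorr]
  | @cons a b w hadj p ih =>
    show ((C.corr a b x).bind (C.walkCorr p) : Option (Fin k)) = some x
    rw [h a b hadj (by simp) x, Option.bind_some]
    exact ih (fun a' b' h1 h2 => h a' b' h1 (by simp [h2])) x

end CorrAssign


open SimpleGraph in
theorem key {V : Type*} [Fintype V] {G : SimpleGraph V} {k : ℕ}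
    (C : CorrAssign G k) :
    ∀ (n : ℕ) (H : G.Subgraph), H.edgeSet.ncard ≤ n →
    (∀ (u : V) (K : G.Walk u u), K.IsCycle → (∀ e ∈ K.edges, e ∈ H.edgeSet) →
      C.ConsistentOn K ∧ ∀ a b : V, G.Adj a b → s(a, b) ∈ K.edges → C.Full a b) →
    ∃ (C' : CorrAssign G k) (π : V → Equiv.Perm (Fin k)),
      C.EquivVia C' π ∧ (∀ a b : V, H.Adj a b → C'.Straight a b) ∧
      ∀ v : V, v ∉ H.verts → π v = 1 := by
  intro n
  induction n with
  | zero =>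
    intro H hle hcyc
    have hfin : H.edgeSet.Finite := Set.toFinite _
    have hemp : H.edgeSet = ∅ := (Set.ncard_eq_zero hfin).mp (Nat.le_zero.mp hle)
    refine ⟨C, fun _ => 1, fun u v _ c => by simp, fun a b hadj => ?_, fun _ _ => rfl⟩
    exact absurd (hemp ▸ SimpleGraph.Subgraph.mem_edgeSet.mpr hadj) (Set.notMem_empty _)
  | succ n IH =>
    intro H hle hcyc
    classical
    by_cases hE : ∃ a b, H.Adj a b
    · obtain ⟨a, b, hab⟩ := hE
      have hGab : G.Adj a b := hab.adj_sub
      set H' := H.deleteEdges {s(a,b)} with hH'def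
      have hfin : H.edgeSet.Finite := Set.toFinite _
      have hsub : H'.edgeSet ⊆ H.edgeSet \ {s(a,b)} := by
        intro e
        refine Sym2.ind (fun u v h => ?_) e
        have h2 := SimpleGraph.Subgraph.mem_edgeSet.mp h
        rw [SimpleGraph.Subgraph.deleteEdges_adj] at h2
        exact ⟨SimpleGraph.Subgraph.mem_edgeSet.mpr h2.1, h2.2⟩
      have hle' : H'.edgeSet.ncard ≤ n := by
        have h1 := Set.ncard_le_ncard hsub hfin.diff
        have h2 := Set.ncard_diff_singleton_lt_of_mem
          (SimpleGraph.Subgraph.mem_edgeSet.mpr hab) hfin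
        omega
      have hsub' : H'.edgeSet ⊆ H.edgeSet := fun e he => (hsub he).1
      have hcyc' : ∀ (u : V) (K : G.Walk u u), K.IsCycle →
          (∀ e ∈ K.edges, e ∈ H'.edgeSet) →
          C.ConsistentOn K ∧ ∀ a b : V, G.Adj a b → s(a, b) ∈ K.edges → C.Full a b :=
        fun u K hK hKe => hcyc u K hK (fun e he => hsub' (hKe e he))
      obtain ⟨C'', π'', h1, hstr'', hfix''⟩ := IH H' hle' hcyc'
      have hverts : H'.verts = H.verts := SimpleGraph.Subgraph.deleteEdges_verts _
      have habnotin : s(a, b) ∉ H'.edgeSet := fun h => (hsub h).2 rfl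
      by_cases hreach : ∃ W : G.Walk b a, ∀ e ∈ W.edges, e ∈ H'.edgeSet
      · -- a fundamental cycle exists; edge a b is already straight in C''
        obtain ⟨W, hWe⟩ := hreach
        set P := W.bypass with hPdef
        have hPe : ∀ e ∈ P.edges, e ∈ H'.edgeSet :=
          fun e he => hWe e (W.edges_bypass_subset he)
        set K := SimpleGraph.Walk.cons hGab P with hKdef
        have hKcyc : K.IsCycle := by
          rw [hKdef, SimpleGraph.Walk.cons_isCycle_iff]
          exact ⟨W.bypass_isPath, fun h => habnotin (hPe _ h)⟩
        have hKedges : ∀ e ∈ K.edges, e ∈ H.edgeSet := by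
          intro e he
          rw [hKdef, SimpleGraph.Walk.edges_cons] at he
          rcases List.mem_cons.mp he with rfl | h
          · exact SimpleGraph.Subgraph.mem_edgeSet.mpr hab
          · exact hsub' (hPe _ h)
        obtain ⟨hKcons, hKfull⟩ := hcyc a K hKcyc hKedges
        have hKcons'' : C''.ConsistentOn K := h1.consistentOn K hKcons
        have hstrP : ∀ x : Fin k, C''.walkCorr P x = some x := by
          refine CorrAssign.walkCorr_eq_some_self C'' P (fun a' b' hadj hmem x => ?_)
          have hfull : C''.Full a' b' := h1.full hadj (hKfull a' b' hadj
            (by rw [hKdef, SimpleGraph.Walk.edges_cons]; exact List.mem_cons_of_mem _ hmem))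
          have hstr : C''.Straight a' b' :=
            hstr'' a' b' (SimpleGraph.Subgraph.mem_edgeSet.mp (hPe _ hmem))
          obtain ⟨y, hy⟩ := Option.isSome_iff_exists.mp (hfull x)
          rw [hy, hstr x y hy]
        have hstrab : C''.Straight a b := by
          intro x y hxy
          have : C''.walkCorr K x = some y := by
            show ((C''.corr a b x).bind (C''.walkCorr P) : Option (Fin k)) = some y
            rw [hxy, Option.bind_some, hstrP y]
          exact hKcons'' x y this
        refine ⟨C'', π'', h1, fun u v huv => ?_, fun v hv => hfix'' v (hverts ▸ hv)⟩
        by_cases he : s(u, v) = s(a, b)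
        · rcases Sym2.eq_iff.mp he with ⟨rfl, rfl⟩ | ⟨rfl, rfl⟩
          · exact hstrab
          · exact hstrab.symm hGab
        · exact hstr'' u v (by
            rw [SimpleGraph.Subgraph.deleteEdges_adj]
            exact ⟨huv, by simpa using he⟩)
      · -- a and b in different components of H'
        set S : Set V := {v | ∃ W : G.Walk b v, ∀ e ∈ W.edges, e ∈ H'.edgeSet} with hSdef
        have hbS : b ∈ S := ⟨SimpleGraph.Walk.nil, by simp⟩
        have haS : a ∉ S := fun ⟨W, hW⟩ => hreach ⟨W, hW⟩
        have hSclosed : ∀ u v, H'.Adj u v → u ∈ S → v ∈ S := by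
          rintro u v huv ⟨W, hW⟩
          refine ⟨W.concat huv.adj_sub, ?_⟩
          intro e he
          rw [SimpleGraph.Walk.edges_concat, List.concat_eq_append] at he
          rcases List.mem_append.mp he with h | h
          · exact hW e h
          · rw [List.mem_singleton.mp h]
            exact SimpleGraph.Subgraph.mem_edgeSet.mpr huv
        have haux : ∀ (x v : V) (W : G.Walk x v),
            (∀ e ∈ W.edges, e ∈ H'.edgeSet) → v ∈ H.verts ∨ v = x := by
          intro x v W
          induction W with
          | nil => exact fun _ => Or.inr rfl
          | @cons x c w hadj p ih =>
            intro hW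
            rcases ih (fun e he => hW e (by simp [he])) with h | rfl
            · exact Or.inl h
            · left
              have hm : s(x, w) ∈ H'.edgeSet := hW _ (by simp)
              have := SimpleGraph.Subgraph.mem_edgeSet.mp hm
              exact hverts ▸ this.snd_mem
        have hSsub : S ⊆ H.verts := by
          rintro v ⟨W, hW⟩
          rcases haux b v W hW with h | rfl
          · exact h
          · exact hab.snd_mem
        obtain ⟨σ, hσ⟩ := exists_perm_extend (C''.corr a b)
        set ρ : V → Equiv.Perm (Fin k) := fun v => if v ∈ S then σ else 1 with hρdef
        refine ⟨C''.transform ρ, fun v => ρ v * π'' v, h1.comp (CorrAssign.equivVia_transform C'' ρ),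
          ?_, ?_⟩
        · intro u v huv
          by_cases he : s(u, v) = s(a, b)
          · have hstrab : (C''.transform ρ).Straight a b := by
              intro c c' hcc
              rw [CorrAssign.transform_apply] at hcc
              obtain ⟨d, hd, rfl⟩ := Option.map_eq_some_iff.mp hcc
              have hρa : ρ a = 1 := by simp only [hρdef]; exact if_neg haS
              have hρb : ρ b = σ := by simp only [hρdef]; exact if_pos hbS
              rw [hρa] at hd
              change C''.corr a b c = some d at hd
              rw [hρb]
              exact hσ c d hd
            rcases Sym2.eq_iff.mp he with ⟨rfl, rfl⟩ | ⟨rfl, rfl⟩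
            · exact hstrab
            · exact hstrab.symm hGab
          · have huv' : H'.Adj u v := by
              rw [SimpleGraph.Subgraph.deleteEdges_adj]
              exact ⟨huv, by simpa using he⟩
            have hρuv : ρ u = ρ v := by
              simp only [hρdef]
              by_cases hu : u ∈ S
              · rw [if_pos hu, if_pos (hSclosed u v huv' hu)]
              · have hv : v ∉ S := fun hv => hu (hSclosed v u huv'.symm hv)
                rw [if_neg hu, if_neg hv]
            intro c c' hcc
            rw [CorrAssign.transform_apply] at hcc
            obtain ⟨d, hd, rfl⟩ := Option.map_eq_some_iff.mp hcc
            rw [hstr'' u v huv' _ _ hd, hρuv]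
            simp
        · intro v hv
          have h2 : π'' v = 1 := hfix'' v (hverts ▸ hv)
          have h3 : ρ v = 1 := by
            simp only [hρdef]; exact if_neg (fun hvS => hv (hSsub hvS))
          show ρ v * π'' v = 1
          rw [h2, h3, mul_one]
    · refine ⟨C, fun _ => 1, fun u v _ c => by simp, fun a b hadj => ?_, fun _ _ => rfl⟩
      exact absurd ⟨a, b, hadj⟩ hE

end AuxStraighten

/-- Lemma 4: let `G` be a finite simple graph with a `k`-correspondence assignment `C`,
and let `H` be a subgraph of `G` such that for every cycle `K` in `H` (a cycle of `G`
all of whose edges lie in `H`), the assignment `C` is consistent on `K` and all edges of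
`K` are full in `C`. Then there is a `k`-correspondence assignment `C'` equivalent to
`C` in which all edges of `H` are straight, with all vertices outside `H` fixed. -/
theorem straighten_subgraph {V : Type*} [Fintype V] {G : SimpleGraph V} {k : ℕ}
    (C : CorrAssign G k) (H : G.Subgraph)
    (hcyc : ∀ (u : V) (K : G.Walk u u), K.IsCycle → (∀ e ∈ K.edges, e ∈ H.edgeSet) →
      C.ConsistentOn K ∧ ∀ a b : V, G.Adj a b → s(a, b) ∈ K.edges → C.Full a b) :
    ∃ (C' : CorrAssign G k) (π : V → Equiv.Perm (Fin k)),
      C.EquivVia C' π ∧ (∀ a b : V, H.Adj a b → C'.Straight a b) ∧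
      ∀ v : V, v ∉ H.verts → π v = 1 := by
  exact key C H.edgeSet.ncard H le_rfl hcyc
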